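/- Let G be a finite group and suppose |G| = p^α · m where p is a prime and gcd(p, m) = 1. Then m divides [ρ(G)]_p, the exponent of p in the prime factorization of ρ(G). -/

import Mathlib

open scoped MatrixGroups

/-- `rho G` is the product of the orders of all elements of `G`. -/
noncomputable def rho (G : Type*) [Monoid G] : ℕ := ∏ᶠ g : G, orderOf g

/-- `expRho G` is the set of exponents in the prime factorization of `rho G`. -/
noncomputable def expRho (G : Type*) [Monoid G] : Finset ℕ :=
  (rho G).factorization.support.image fun p => (rho G).factorization p


section Decomp
variable {p : ℕ} {H : Type*} [Group H]

lemma exists_dinv {m q : ℕ} (h : Nat.Coprime m q) : ∃ d : ℕ, d * m ≡ 1 [MOD q] := by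
  rcases lt_or_ge 1 q with hq | hq
  · obtain ⟨d, -, hd⟩ := Nat.exists_mul_mod_eq_one_of_coprime h hq
    exact ⟨d, by rw [Nat.ModEq, mul_comm, hd, Nat.mod_eq_of_lt hq]⟩
  · interval_cases q
    · exact ⟨1, by simpa [Nat.ModEq] using (Nat.coprime_zero_right m).mp h⟩
    · exact ⟨1, Nat.modEq_one⟩

variable {q m d : ℕ} (hqm : ∀ g : H, g ^ (q * m) = 1) (hd : d * m ≡ 1 [MOD q])

include hqm in
lemma pPart_pow (g : H) : (g ^ (d * m)) ^ q = 1 := by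
  rw [← pow_mul]
  exact orderOf_dvd_iff_pow_eq_one.mp
    (dvd_trans (orderOf_dvd_iff_pow_eq_one.mpr (hqm g)) ⟨d, by ring⟩)

include hd in
lemma pow_dm_eq_self {u : H} (hu : u ^ q = 1) : u ^ (d * m) = u := by
  conv_rhs => rw [← pow_one u]
  exact pow_eq_pow_iff_modEq.mpr
    ((hd.of_dvd (orderOf_dvd_iff_pow_eq_one.mpr hu)) )

include hd in
lemma uv_pow_dm {u v : H} (hu : u ^ q = 1) (hv : v ^ m = 1) (huv : Commute u v) :
    (u * v) ^ (d * m) = u := by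
  rw [huv.mul_pow, pow_dm_eq_self hd hu, mul_comm d m, pow_mul, hv, one_pow, mul_one]

include hqm hd in
lemma vPart_pow (g : H) : ((g ^ (d * m))⁻¹ * g) ^ m = 1 := by
  have hc : Commute ((g ^ (d * m))⁻¹) g := (((Commute.refl g).pow_left (d * m)).inv_left)
  rw [hc.mul_pow, inv_pow, ← pow_mul]
  have h1 : g ^ (d * m * m) = g ^ (1 * m) := by
    refine pow_eq_pow_iff_modEq.mpr ((Nat.ModEq.mul_right' hd (c := m)).of_dvd ?_)
    exact orderOf_dvd_iff_pow_eq_one.mpr (hqm g)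
  rw [h1, one_mul, inv_mul_cancel]

include hqm in
lemma pow_m_eq_one_iff (hp : p.Prime) (hpm : ¬ p ∣ m) (hq : ∃ a : ℕ, q = p ^ a) (v : H) :
    v ^ m = 1 ↔ ¬ p ∣ orderOf v := by
  obtain ⟨a, rfl⟩ := hq
  constructor
  · intro h hdvd
    exact hpm (hdvd.trans (orderOf_dvd_iff_pow_eq_one.mpr h))
  · intro h
    have h1 : orderOf v ∣ p ^ a * m := orderOf_dvd_iff_pow_eq_one.mpr (hqm v)
    have hcop : Nat.Coprime (orderOf v) (p ^ a) :=
      ((Nat.Prime.coprime_iff_not_dvd hp).mpr h).symm.pow_right a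
    exact orderOf_dvd_iff_pow_eq_one.mp (hcop.dvd_of_dvd_mul_left h1)

end Decomp

section Count
open Subgroup
attribute [local instance] Classical.propDecidable
variable {p : ℕ} {H : Type*} [Group H] [Fintype H]
variable {q m d : ℕ} (hqm : ∀ g : H, g ^ (q * m) = 1) (hd : d * m ≡ 1 [MOD q])

/-- number of `p'`-elements of a group -/
noncomputable def rP (p : ℕ) (H : Type*) [Group H] : ℕ := Nat.card {v : H // ¬ p ∣ orderOf v}

include hqm hd in
lemma fiber_card (u : H) (hu : u ^ q = 1) :
    Nat.card {g : H // g ^ (d * m) = u} =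
      Nat.card {v : centralizer {u} // (v : H) ^ m = 1} := by
  refine Nat.card_congr ?_
  have hcomm : ∀ g : {g : H // g ^ (d * m) = u}, Commute u g.1 := by
    rintro ⟨g, hg⟩
    simpa only [hg] using ((Commute.refl g).pow_left (d * m))
  refine
    { toFun := fun g => ⟨⟨u⁻¹ * g.1, mem_centralizer_iff.mpr ?_⟩, ?_⟩
      invFun := fun v => ⟨u * v.1.1, ?_⟩
      left_inv := fun g => Subtype.ext (by simp)
      right_inv := fun v => Subtype.ext (Subtype.ext (by simp)) }
  · rintro h rfl
    exact ((Commute.refl _).inv_right.mul_right (hcomm g)).eq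
  · have := vPart_pow hqm hd g.1
    rwa [g.2] at this
  · have hv : (v.1.1 : H) ^ m = 1 := v.2
    exact uv_pow_dm hd hu hv (mem_centralizer_iff.mp v.1.2 u rfl)

include hqm hd in
lemma key_sum (c : H → ℕ) :
    ∑ g : H, c (g ^ (d * m)) =
      ∑ u ∈ Finset.univ.filter (fun u : H => u ^ q = 1),
        c u * Nat.card {v : centralizer {u} // (v : H) ^ m = 1} := by
  classical
  have hfib := Finset.sum_fiberwise_of_maps_to (s := (Finset.univ : Finset H))
    (t := Finset.univ.filter fun u : H => u ^ q = 1)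
    (g := fun g : H => g ^ (d * m))
    (fun x _ => Finset.mem_filter.mpr ⟨Finset.mem_univ _, pPart_pow hqm x⟩)
    (fun g => c (g ^ (d * m)))
  rw [← hfib]
  refine Finset.sum_congr rfl fun u hu => ?_
  have hu' : u ^ q = 1 := (Finset.mem_filter.mp hu).2
  rw [← fiber_card hqm hd u hu']
  have : ∀ g ∈ Finset.univ.filter (fun g : H => g ^ (d * m) = u),
      c (g ^ (d * m)) = c u := fun g hg => by
    rw [(Finset.mem_filter.mp hg).2]
  rw [Finset.sum_congr rfl this, Finset.sum_const, smul_eq_mul, mul_comm,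
    Nat.card_eq_fintype_card, Fintype.card_subtype]

end Count

section Orbit
open Subgroup MulAction
attribute [local instance] Classical.propDecidable

variable {H : Type*} [Group H] [Fintype H]

lemma orbit_sum_dvd (m : ℕ) (w : H → ℕ)
    (hw : ∀ h u : H, w (h * u * h⁻¹) = w u)
    (hdvd : ∀ u : H, m ∣ Nat.card (MulAction.orbit (ConjAct H) u) * w u) :
    m ∣ ∑ u : H, w u := by
  classical
  have hconst : ∀ (x u : H), u ∈ MulAction.orbit (ConjAct H) x → w u = w x := by
    rintro x u ⟨c, rfl⟩
    show w (c • x) = w x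
    rw [ConjAct.smul_def]
    exact hw _ _
  have hfib := Finset.sum_fiberwise_of_maps_to (s := (Finset.univ : Finset H))
    (t := (Finset.univ : Finset (MulAction.orbitRel.Quotient (ConjAct H) H)))
    (g := fun u : H => (Quotient.mk'' u : MulAction.orbitRel.Quotient (ConjAct H) H))
    (fun x _ => Finset.mem_univ _) w
  rw [← hfib]
  refine Finset.dvd_sum fun ω _ => ?_
  have hmem : ∀ u : H, (Quotient.mk'' u : MulAction.orbitRel.Quotient (ConjAct H) H) = ω ↔
      u ∈ MulAction.orbit (ConjAct H) ω.out := by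
    intro u
    rw [← MulAction.orbitRel.Quotient.mem_orbit,
      MulAction.orbitRel.Quotient.orbit_eq_orbit_out ω Quotient.out_eq']
  have : ∀ u ∈ Finset.univ.filter
      (fun u : H => (Quotient.mk'' u : MulAction.orbitRel.Quotient (ConjAct H) H) = ω),
      w u = w ω.out := by
    intro u hu
    exact hconst _ _ ((hmem u).mp (Finset.mem_filter.mp hu).2)
  rw [Finset.sum_congr rfl this, Finset.sum_const, smul_eq_mul]
  have hcard : (Finset.univ.filter
      (fun u : H => (Quotient.mk'' u : MulAction.orbitRel.Quotient (ConjAct H) H) = ω)).card =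
      Nat.card (MulAction.orbit (ConjAct H) ω.out) := by
    have h2 : Fintype.card {u : H // (Quotient.mk'' u :
        MulAction.orbitRel.Quotient (ConjAct H) H) = ω} =
        Fintype.card (MulAction.orbit (ConjAct H) ω.out) :=
      Fintype.card_congr (Equiv.subtypeEquivRight fun u => hmem u)
    rw [Nat.card_eq_fintype_card, ← h2, Fintype.card_subtype]
  rw [hcard]
  exact hdvd ω.out

lemma card_stabilizer_eq_card_centralizer (u : H) :
    Nat.card (MulAction.stabilizer (ConjAct H) u) = Nat.card (centralizer {u}) := by
  refine (Nat.card_congr ?_).symm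
  refine
    { toFun := fun x => ⟨ConjAct.toConjAct x.1, ?_⟩
      invFun := fun y => ⟨ConjAct.ofConjAct y.1, ?_⟩
      left_inv := fun x => Subtype.ext (by simp)
      right_inv := fun y => Subtype.ext (by simp) }
  · exact (Subgroup.centralizer_eq_comap_stabilizer u).le x.2
  · rw [Subgroup.centralizer_eq_comap_stabilizer]
    exact y.2

lemma card_orbit_conjAct (u : H) :
    Nat.card (MulAction.orbit (ConjAct H) u) * Nat.card (centralizer {u}) = Nat.card H := by
  classical
  rw [← card_stabilizer_eq_card_centralizer]
  simp only [Nat.card_eq_fintype_card]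
  exact MulAction.card_orbit_mul_card_stabilizer_eq_card_group (ConjAct H) u

end Orbit

section ClaimA
open Subgroup
attribute [local instance] Classical.propDecidable

variable {p : ℕ} {H : Type*} [Group H]

lemma rP_equiv {A B : Type*} [Group A] [Group B] (e : A ≃* B) : rP p A = rP p B :=
  Nat.card_congr (Equiv.subtypeEquiv e.toEquiv fun a => by rw [show e.toEquiv a = e a from rfl, e.orderOf_eq a])

lemma rP_top : rP p ((⊤ : Subgroup H)) = rP p H := rP_equiv Subgroup.topEquiv

lemma conj_mem_centralizer {u x : H} (h : H)
    (hx : x ∈ centralizer {u}) : h * x * h⁻¹ ∈ centralizer {h * u * h⁻¹} := by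
  rw [mem_centralizer_singleton_iff] at hx ⊢
  calc (h * x * h⁻¹) * (h * u * h⁻¹) = h * (x * u) * h⁻¹ := by group
  _ = h * (u * x) * h⁻¹ := by rw [hx]
  _ = (h * u * h⁻¹) * (h * x * h⁻¹) := by group

lemma map_conj_centralizer (h u : H) :
    (centralizer {u}).map (MulAut.conj h).toMonoidHom = centralizer {h * u * h⁻¹} := by
  ext x
  constructor
  · rintro ⟨y, hy, rfl⟩
    simpa [MulAut.conj_apply] using conj_mem_centralizer h hy
  · intro hx
    refine ⟨h⁻¹ * x * h, ?_, by simp [MulAut.conj_apply]; group⟩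
    have h2 := conj_mem_centralizer h⁻¹ hx
    have h3 : h⁻¹ * (h * u * h⁻¹) * h⁻¹⁻¹ = u := by group
    have h4 : h⁻¹ * x * h⁻¹⁻¹ = h⁻¹ * x * h := by rw [inv_inv]
    rwa [h3, h4] at h2

lemma rP_centralizer_conj (h u : H) :
    rP p (centralizer {h * u * h⁻¹}) = rP p (centralizer {u}) := by
  rw [← map_conj_centralizer h u]
  exact (rP_equiv (Subgroup.equivMapOfInjective _ _ (MulAut.conj h).injective)).symm

lemma conj_pow_eq_one_iff (h u : H) (q : ℕ) : (h * u * h⁻¹) ^ q = 1 ↔ u ^ q = 1 := by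
  have : (h * u * h⁻¹) ^ q = h * u ^ q * h⁻¹ := by
    rw [show h * u * h⁻¹ = MulAut.conj h u from rfl, ← map_pow, MulAut.conj_apply]
  rw [this]
  constructor
  · intro hh
    have := congrArg (fun x => h⁻¹ * x * h) hh
    simpa [mul_assoc] using this
  · intro hh; rw [hh]; group

lemma conj_of_mem_center {u : H} (hu : u ∈ center H) (h : H) : h * u * h⁻¹ = u := by
  rw [Subgroup.mem_center_iff.mp hu h, mul_inv_cancel_right]

lemma conj_mem_center_iff (h u : H) : h * u * h⁻¹ ∈ center H ↔ u ∈ center H := by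
  constructor
  · intro hc
    have h2 := conj_of_mem_center hc h⁻¹
    have h3 : h⁻¹ * (h * u * h⁻¹) * h⁻¹⁻¹ = u := by group
    rw [h3] at h2
    rw [h2]
    exact hc
  · intro hc
    rw [conj_of_mem_center hc h]
    exact hc

end ClaimA

section Induction
open Subgroup
attribute [local instance] Classical.propDecidable

universe u

lemma claimA_aux (p : ℕ) (hp : p.Prime) :
    ∀ N : ℕ, ∀ (H : Type u) (_ : Group H) (_ : Fintype H), Nat.card H = N →
      ordCompl[p] (Nat.card H) ∣ rP p H := by
  intro N
  induction N using Nat.strong_induction_on with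
  | _ N IH =>
  intro H _ _ hN
  haveI : Fact p.Prime := ⟨hp⟩
  set n := Nat.card H with hn
  have hn0 : n ≠ 0 := Nat.card_pos.ne'
  set a := n.factorization p with ha
  set q := p ^ a with hq
  set m := ordCompl[p] n with hm
  have hqmn : q * m = n := Nat.ordProj_mul_ordCompl_eq_self n p
  have hpm : ¬ p ∣ m := Nat.not_dvd_ordCompl hp hn0
  have hmq : Nat.Coprime m q := (Nat.coprime_ordCompl hp hn0).symm.pow_right a
  obtain ⟨d, hd⟩ := exists_dinv hmq
  have hqm : ∀ g : H, g ^ (q * m) = 1 := fun g => by rw [hqmn]; exact pow_card_eq_one'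
  have hfib_eq : ∀ u : H, Nat.card {v : centralizer {u} // (v : H) ^ m = 1}
      = rP p (centralizer {u}) := by
    intro u
    refine Nat.card_congr (Equiv.subtypeEquivRight fun v => ?_)
    rw [← orderOf_coe v]
    exact pow_m_eq_one_iff hqm hp hpm ⟨a, rfl⟩ (v : H)
  have hkey := key_sum hqm hd (fun _ => (1 : ℕ))
  simp only [one_mul] at hkey
  have hcount : n = ∑ u ∈ Finset.univ.filter (fun u : H => u ^ q = 1),
      rP p (centralizer {u}) := by
    rw [← Finset.sum_congr rfl (fun u _ => hfib_eq u), ← hkey]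
    rw [Finset.sum_const, smul_eq_mul, mul_one, Finset.card_univ, hn,
      Nat.card_eq_fintype_card]
  set S := Finset.univ.filter (fun u : H => u ^ q = 1) with hS
  have hsplit := Finset.sum_filter_add_sum_filter_not S (fun u => u ∈ center H)
    (fun u => rP p (centralizer {u}))
  -- central part
  have hcen : ∀ u ∈ S.filter (fun u => u ∈ center H),
      rP p (centralizer {u}) = rP p H := by
    intro u hu
    have hu2 : u ∈ center H := (Finset.mem_filter.mp hu).2
    have : centralizer {u} = (⊤ : Subgroup H) :=
      (Subgroup.eq_top_iff' (centralizer {u})).mpr fun x =>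
        mem_centralizer_singleton_iff.mpr (Subgroup.mem_center_iff.mp hu2 x)
    rw [this, rP_top]
  have hcensum : ∑ u ∈ S.filter (fun u => u ∈ center H), rP p (centralizer {u}) =
      (S.filter (fun u => u ∈ center H)).card * rP p H := by
    rw [Finset.sum_congr rfl hcen, Finset.sum_const, smul_eq_mul]
  -- the central p-elements form a p-group
  have hzpow : ∃ c : ℕ, (S.filter (fun u => u ∈ center H)).card = p ^ c := by
    set Z : Subgroup H :=
      { carrier := {u : H | u ^ q = 1 ∧ u ∈ center H}
        one_mem' := ⟨one_pow q, (Subgroup.center H).one_mem⟩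
        mul_mem' := by
          rintro x y ⟨hx1, hx2⟩ ⟨hy1, hy2⟩
          refine ⟨?_, (Subgroup.center H).mul_mem hx2 hy2⟩
          have hc : Commute x y := (Subgroup.mem_center_iff.mp hx2 y).symm
          rw [hc.mul_pow, hx1, hy1, one_mul]
        inv_mem' := by
          rintro x ⟨hx1, hx2⟩
          exact ⟨by rw [inv_pow, hx1, inv_one], (Subgroup.center H).inv_mem hx2⟩ } with hZ
    have hcard : (S.filter (fun u => u ∈ center H)).card = Nat.card Z := by
      have h1 : S.filter (fun u => u ∈ center H) =
          Finset.univ.filter (fun u : H => u ^ q = 1 ∧ u ∈ center H) := by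
        rw [hS, Finset.filter_filter]
      have h2 : Fintype.card {x : H // x ^ q = 1 ∧ x ∈ center H} =
          Fintype.card {x : H // x ∈ Z} :=
        Fintype.card_congr (Equiv.subtypeEquivRight fun u => Iff.rfl)
      rw [h1, Nat.card_eq_fintype_card, ← h2, Fintype.card_subtype]
    have hZp : IsPGroup p Z := by
      intro z
      exact ⟨a, Subtype.ext (by simpa using z.2.1)⟩
    obtain ⟨c, hc⟩ := (IsPGroup.iff_card (p := p) (G := Z)).mp hZp
    exact ⟨c, hcard.trans hc⟩
  -- noncentral part
  have hM : m ∣ ∑ u ∈ S.filter (fun u => ¬ u ∈ center H), rP p (centralizer {u}) := by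
    set w : H → ℕ := fun u =>
      if u ^ q = 1 ∧ u ∉ center H then rP p (centralizer {u}) else 0 with hw
    have hMw : ∑ u ∈ S.filter (fun u => ¬ u ∈ center H), rP p (centralizer {u}) =
        ∑ u : H, w u := by
      rw [hS, Finset.filter_filter, Finset.sum_filter]
    rw [hMw]
    refine orbit_sum_dvd m w ?_ ?_
    · intro h u
      by_cases hcond : u ^ q = 1 ∧ u ∉ center H
      · have : (h * u * h⁻¹) ^ q = 1 ∧ h * u * h⁻¹ ∉ center H :=
          ⟨(conj_pow_eq_one_iff h u q).mpr hcond.1,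
           fun hc => hcond.2 ((conj_mem_center_iff h u).mp hc)⟩
        rw [hw]
        simp only [if_pos hcond, if_pos this]
        exact rP_centralizer_conj h u
      · have : ¬ ((h * u * h⁻¹) ^ q = 1 ∧ h * u * h⁻¹ ∉ center H) := by
          intro hc
          exact hcond ⟨(conj_pow_eq_one_iff h u q).mp hc.1,
            fun hc2 => hc.2 ((conj_mem_center_iff h u).mpr hc2)⟩
        rw [hw]
        simp only [if_neg hcond, if_neg this]
    · intro u
      by_cases hcond : u ^ q = 1 ∧ u ∉ center H
      · have hwu : w u = rP p (centralizer {u}) := if_pos hcond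
        rw [hwu]
        have hCne : centralizer {u} ≠ (⊤ : Subgroup H) := by
          intro htop
          refine hcond.2 (Subgroup.mem_center_iff.mpr fun g => ?_)
          have hg : g ∈ centralizer {u} := htop ▸ Subgroup.mem_top g
          exact mem_centralizer_singleton_iff.mp hg
        have hlt : Nat.card (centralizer {u}) < N := by
          rw [← hN]
          refine Nat.lt_of_le_of_ne
            (Nat.le_of_dvd (Nat.pos_of_ne_zero hn0) (Subgroup.card_subgroup_dvd_card _)) ?_
          intro he
          exact hCne (Subgroup.eq_top_of_card_eq _ he)
        have hIH := IH _ hlt (centralizer {u}) inferInstance inferInstance rfl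
        have horb' : Nat.card (MulAction.orbit (ConjAct H) u) *
            Nat.card (centralizer {u}) = n := (card_orbit_conjAct u).trans hn.symm
        have hsplit2 : m = ordCompl[p] (Nat.card (MulAction.orbit (ConjAct H) u)) *
            ordCompl[p] (Nat.card (centralizer {u})) := by
          rw [hm, ← horb', Nat.ordCompl_mul]
        rw [hsplit2]
        exact mul_dvd_mul (Nat.ordCompl_dvd _ p) hIH
      · have hwu : w u = 0 := if_neg hcond
        rw [hwu, mul_zero]
        exact dvd_zero m
  -- combine
  obtain ⟨c, hc⟩ := hzpow
  have hmn : m ∣ n := by rw [← hqmn]; exact dvd_mul_left m q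
  rw [hcount, ← hsplit, hcensum, hc] at hmn
  have hfinal : m ∣ p ^ c * rP p H := by
    have := (Nat.dvd_add_right hM).mp (by rwa [add_comm] at hmn)
    exact this
  have hcop : Nat.Coprime m (p ^ c) := (Nat.coprime_ordCompl hp hn0).symm.pow_right c
  exact hcop.dvd_of_dvd_mul_left hfinal

lemma claimA (p : ℕ) (hp : p.Prime) (H : Type u) [Group H] [Finite H] :
    ordCompl[p] (Nat.card H) ∣ rP p H := by
  haveI := Fintype.ofFinite H
  exact claimA_aux p hp (Nat.card H) H inferInstance inferInstance rfl

end Induction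

section Main
open Subgroup
attribute [local instance] Classical.propDecidable

variable {H : Type*} [Group H] [Fintype H]

lemma val_pPart (p : ℕ) (hp : p.Prime) {q m d : ℕ}
    (hqm : ∀ g : H, g ^ (q * m) = 1) (hd : d * m ≡ 1 [MOD q])
    (hpm : ¬ p ∣ m) (hqpow : ∃ a : ℕ, q = p ^ a) (g : H) :
    (orderOf (g ^ (d * m))).factorization p = (orderOf g).factorization p := by
  have h0 : ∀ x : H, orderOf x ≠ 0 := fun x => (orderOf_pos x).ne'
  refine Nat.le_antisymm ?_ ?_
  · exact (Nat.factorization_le_iff_dvd (h0 _) (h0 _)).mpr (orderOf_pow_dvd (d * m)) p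
  · set u := g ^ (d * m) with hu
    set v := u⁻¹ * g with hv
    have hguv : g = u * v := by rw [hv, mul_inv_cancel_left]
    have hcomm : Commute u v := by
      have h1 : Commute u g := (Commute.refl g).pow_left (d * m)
      rw [hv]
      exact (Commute.refl u).inv_right.mul_right h1
    have hvm : v ^ m = 1 := vPart_pow hqm hd g
    have hpv : ¬ p ∣ orderOf v := (pow_m_eq_one_iff hqm hp hpm hqpow v).mp hvm
    have hdvd : orderOf g ∣ orderOf u * orderOf v := by
      rw [hguv]
      exact Commute.orderOf_mul_dvd_mul_orderOf hcomm
    have h1 := (Nat.factorization_le_iff_dvd (h0 g)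
      (Nat.mul_ne_zero (h0 u) (h0 v))).mpr hdvd p
    rwa [Nat.factorization_mul (h0 u) (h0 v), Finsupp.add_apply,
      Nat.factorization_eq_zero_of_not_dvd hpv, add_zero] at h1
end Main

section Final
open Subgroup
attribute [local instance] Classical.propDecidable

theorem p_part_divisible (G : Type*) [Group G] [Finite G]
    (p α m : ℕ) (hp : p.Prime) (hG : Nat.card G = p ^ α * m)
    (hcop : Nat.Coprime p m) :
    m ∣ (rho G).factorization p := by
  classical
  haveI := Fintype.ofFinite G
  haveI : Fact p.Prime := ⟨hp⟩
  set n := Nat.card G with hn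
  have hn0 : n ≠ 0 := Nat.card_pos.ne'
  have hm0 : m ≠ 0 := by rintro rfl; exact hn0 (by rw [hG, mul_zero])
  have hpm : ¬ p ∣ m := (Nat.Prime.coprime_iff_not_dvd hp).mp hcop
  have hfac : n.factorization p = α := by
    rw [hG, Nat.factorization_mul (pow_ne_zero α hp.pos.ne') hm0, Finsupp.add_apply,
      hp.factorization_pow, Finsupp.single_eq_same,
      Nat.factorization_eq_zero_of_not_dvd hpm, add_zero]
  have hmeq : m = ordCompl[p] n := by
    rw [hfac, hG, Nat.mul_div_cancel_left _ (pow_pos hp.pos α)]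
  set a := n.factorization p with ha
  set q := p ^ a with hq
  have hqmn : q * m = n := by rw [hmeq]; exact Nat.ordProj_mul_ordCompl_eq_self n p
  have hmq : Nat.Coprime m q := hcop.symm.pow_right a
  obtain ⟨d, hd⟩ := exists_dinv hmq
  have hqm : ∀ g : G, g ^ (q * m) = 1 := fun g => by rw [hqmn]; exact pow_card_eq_one'
  have h0 : ∀ x : G, orderOf x ≠ 0 := fun x => (orderOf_pos x).ne'
  have hrho : (rho G).factorization p = ∑ g : G, (orderOf g).factorization p := by
    rw [show rho G = ∏ g : G, orderOf g from finprod_eq_prod_of_fintype _,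
      Nat.factorization_prod (fun g _ => h0 g), Finset.sum_apply']
  rw [hrho]
  have hstep3 : ∀ g : G, (orderOf g).factorization p
      = (orderOf (g ^ (d * m))).factorization p :=
    fun g => (val_pPart p hp hqm hd hpm ⟨a, rfl⟩ g).symm
  rw [Finset.sum_congr rfl fun g _ => hstep3 g]
  rw [key_sum hqm hd (fun u => (orderOf u).factorization p)]
  have hfib_eq : ∀ u : G, Nat.card {v : centralizer {u} // (v : G) ^ m = 1}
      = rP p (centralizer {u}) := by
    intro u
    refine Nat.card_congr (Equiv.subtypeEquivRight fun v => ?_)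
    rw [← orderOf_coe v]
    exact pow_m_eq_one_iff hqm hp hpm ⟨a, rfl⟩ (v : G)
  set w : G → ℕ := fun u =>
    if u ^ q = 1 then (orderOf u).factorization p * rP p (centralizer {u}) else 0 with hw
  have hsum : ∑ u ∈ Finset.univ.filter (fun u : G => u ^ q = 1),
      (orderOf u).factorization p * Nat.card {v : centralizer {u} // (v : G) ^ m = 1}
      = ∑ u : G, w u := by
    rw [Finset.sum_congr rfl fun u _ => by rw [hfib_eq u], Finset.sum_filter]
  rw [hsum]
  refine orbit_sum_dvd m w ?_ ?_
  · intro h u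
    have h1 : (h * u * h⁻¹) ^ q = 1 ↔ u ^ q = 1 := conj_pow_eq_one_iff h u q
    have h2 : orderOf (h * u * h⁻¹) = orderOf u := by
      simpa [MulAut.conj_apply] using (MulAut.conj h).orderOf_eq u
    by_cases hc : u ^ q = 1
    · simp only [hw]
      rw [if_pos (h1.mpr hc), if_pos hc, h2, rP_centralizer_conj]
    · simp only [hw]
      rw [if_neg (fun hcc => hc (h1.mp hcc)), if_neg hc]
  · intro u
    by_cases hc : u ^ q = 1
    · have hwu : w u = (orderOf u).factorization p * rP p (centralizer {u}) := if_pos hc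
      rw [hwu]
      have horb' : Nat.card (MulAction.orbit (ConjAct G) u) *
          Nat.card (centralizer {u}) = n := (card_orbit_conjAct u).trans hn.symm
      have hIH : ordCompl[p] (Nat.card (centralizer {u})) ∣ rP p (centralizer {u}) :=
        claimA p hp (centralizer {u})
      have hsplit2 : m = ordCompl[p] (Nat.card (MulAction.orbit (ConjAct G) u)) *
          ordCompl[p] (Nat.card (centralizer {u})) := by
        rw [hmeq, hq, ha, ← horb', Nat.ordCompl_mul]
      rw [hsplit2]
      refine dvd_trans (mul_dvd_mul (Nat.ordCompl_dvd _ p) hIH) ?_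
      exact mul_dvd_mul_left _ (dvd_mul_left _ _)
    · have hwu : w u = 0 := if_neg hc
      rw [hwu, mul_zero]
      exact dvd_zero m

end Final
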